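/- Let G ⊆ GL_d(ℝ) act linearly on ℝ^d leaving a differentiable function L invariant, and let M ∈ Lie(G) with M^T ∈ Lie(G). Then the function Q_M(v) = vᵀMv is constant along any gradient flow curve of L, i.e., if γ'(t) = -∇L(γ(t)) then t ↦ γ(t)ᵀ M γ(t) is constant. -/

import Mathlib

open Matrix
open scoped RealInnerProductSpace

attribute [local instance] Matrix.linftyOpNormedRing Matrix.linftyOpNormedAlgebra

lemma grad_inner_zero {d : ℕ} (L : EuclideanSpace ℝ (Fin d) → ℝ) (hL : Differentiable ℝ L)
    (N : Matrix (Fin d) (Fin d) ℝ)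
    (hN : ∀ (t : ℝ) (θ : EuclideanSpace ℝ (Fin d)),
      L (Matrix.toEuclideanLin (NormedSpace.exp (t • N)) θ) = L θ)
    (θ : EuclideanSpace ℝ (Fin d)) :
    ⟪gradient L θ, Matrix.toEuclideanLin N θ⟫ = 0 := by
  set ψ : Matrix (Fin d) (Fin d) ℝ →L[ℝ] EuclideanSpace ℝ (Fin d) :=
    (LinearMap.toContinuousLinearMap
      ((Matrix.toEuclideanLin : Matrix (Fin d) (Fin d) ℝ ≃ₗ[ℝ]
        (EuclideanSpace ℝ (Fin d) →ₗ[ℝ] EuclideanSpace ℝ (Fin d))).toLinearMap.flip θ)) with hψ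
  have hψ_apply : ∀ A, ψ A = Matrix.toEuclideanLin A θ := fun A => rfl
  have h1 : HasDerivAt (fun u : ℝ => NormedSpace.exp (u • N))
      (N * NormedSpace.exp ((0:ℝ) • N)) 0 := hasDerivAt_exp_smul_const' N 0
  have h2 : HasDerivAt (fun u : ℝ => ψ (NormedSpace.exp (u • N)))
      (ψ (N * NormedSpace.exp ((0:ℝ) • N))) 0 := ψ.hasFDerivAt.comp_hasDerivAt 0 h1
  have hsimp : ψ (N * NormedSpace.exp ((0:ℝ) • N)) = Matrix.toEuclideanLin N θ := by
    rw [zero_smul, NormedSpace.exp_zero, mul_one, hψ_apply]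
  rw [hsimp] at h2
  have hpt : (fun u : ℝ => ψ (NormedSpace.exp (u • N))) 0 = θ := by
    simp [hψ_apply, Matrix.toEuclideanLin_eq_toLin]
  have h3 : HasDerivAt (fun u : ℝ => L (ψ (NormedSpace.exp (u • N))))
      (⟪gradient L θ, Matrix.toEuclideanLin N θ⟫) 0 := by
    have hfd : HasFDerivAt L ((InnerProductSpace.toDual ℝ _) (gradient L θ))
        ((fun u : ℝ => ψ (NormedSpace.exp (u • N))) 0) := by
      rw [hpt]; exact (hL θ).hasGradientAt.hasFDerivAt
    have h := hfd.comp_hasDerivAt 0 h2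
    simp only [InnerProductSpace.toDual_apply_apply] at h
    exact h
  have h4 : HasDerivAt (fun u : ℝ => L (ψ (NormedSpace.exp (u • N)))) 0 0 := by
    have : (fun u : ℝ => L (ψ (NormedSpace.exp (u • N)))) = fun _ => L θ := by
      funext u; exact hN u θ
    rw [this]; exact hasDerivAt_const 0 _
  exact h3.unique h4

/-- Let `G ⊆ GL_d(ℝ)` act linearly (by matrix multiplication) on `ℝ^d` leaving the
differentiable function `L` invariant, and let `M ∈ Lie(G)` with `Mᵀ ∈ Lie(G)` (so the
one-parameter subgroups `exp(tM)` and `exp(tMᵀ)` lie in `G` and hence leave `L`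
invariant). Then `Q_M(v) = vᵀMv` is constant along any gradient flow curve of `L`. -/
theorem conserved_quantity_of_infinitesimal_symmetry
    {d : ℕ} (L : EuclideanSpace ℝ (Fin d) → ℝ) (hL : Differentiable ℝ L)
    (M : Matrix (Fin d) (Fin d) ℝ)
    (hM : ∀ (t : ℝ) (θ : EuclideanSpace ℝ (Fin d)),
      L (Matrix.toEuclideanLin (NormedSpace.exp (t • M)) θ) = L θ)
    (hMT : ∀ (t : ℝ) (θ : EuclideanSpace ℝ (Fin d)),
      L (Matrix.toEuclideanLin (NormedSpace.exp (t • Mᵀ)) θ) = L θ)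
    (γ : ℝ → EuclideanSpace ℝ (Fin d))
    (hγ : ∀ t : ℝ, HasDerivAt γ (-gradient L (γ t)) t)
    (s t : ℝ) :
    ⟪γ s, Matrix.toEuclideanLin M (γ s)⟫ = ⟪γ t, Matrix.toEuclideanLin M (γ t)⟫ := by
  set A : EuclideanSpace ℝ (Fin d) →L[ℝ] EuclideanSpace ℝ (Fin d) :=
    LinearMap.toContinuousLinearMap (Matrix.toEuclideanLin M) with hA
  have hQ : ∀ u : ℝ, HasDerivAt (fun r => ⟪γ r, Matrix.toEuclideanLin M (γ r)⟫) 0 u := by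
    intro u
    have h1 : HasDerivAt (fun r => A (γ r)) (A (-gradient L (γ u))) u :=
      A.hasFDerivAt.comp_hasDerivAt u (hγ u)
    have h2 := (hγ u).inner ℝ h1
    have e1 : ⟪gradient L (γ u), Matrix.toEuclideanLin M (γ u)⟫ = 0 :=
      grad_inner_zero L hL M hM (γ u)
    have e2 : ⟪gradient L (γ u), Matrix.toEuclideanLin Mᵀ (γ u)⟫ = 0 :=
      grad_inner_zero L hL Mᵀ hMT (γ u)
    have e3 : ⟪γ u, A (-gradient L (γ u))⟫ = -⟪gradient L (γ u), Matrix.toEuclideanLin Mᵀ (γ u)⟫ := by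
      have : A (-gradient L (γ u)) = Matrix.toEuclideanLin M (-gradient L (γ u)) := rfl
      rw [this]
      have hadj : Matrix.toEuclideanLin Mᵀ = LinearMap.adjoint (Matrix.toEuclideanLin M) := by
        rw [← Matrix.conjTranspose_eq_transpose_of_trivial,
          Matrix.toEuclideanLin_conjTranspose_eq_adjoint]
      rw [map_neg, inner_neg_right, hadj]
      rw [← LinearMap.adjoint_inner_left]
      rw [real_inner_comm]
    have e4 : ⟪-gradient L (γ u), A (γ u)⟫ = 0 := by
      have : A (γ u) = Matrix.toEuclideanLin M (γ u) := rfl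
      rw [this, inner_neg_left, e1, neg_zero]
    have : ⟪γ u, A (-gradient L (γ u))⟫ + ⟪-gradient L (γ u), A (γ u)⟫ = 0 := by
      rw [e3, e2, e4, neg_zero, add_zero]
    have h2' : (fun r => ⟪γ r, A (γ r)⟫) = fun r => ⟪γ r, Matrix.toEuclideanLin M (γ r)⟫ := rfl
    rw [h2'] at h2
    rwa [this] at h2
  have hconst := is_const_of_deriv_eq_zero (f := fun r => ⟪γ r, Matrix.toEuclideanLin M (γ r)⟫)
    (fun u => (hQ u).differentiableAt) (fun u => (hQ u).deriv)
  exact hconst s t
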